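/- Let A be an n × n real graph Laplacian matrix and let t ≥ 0. Then the matrix I − t·A is invertible and every entry of (I − t·A)⁻¹ is nonnegative. -/

import Mathlib

open Matrix

/-- An `n × n` real matrix is a graph Laplacian if its off-diagonal entries are
nonnegative, its diagonal entries are nonpositive, and each column sums to zero. -/
def IsGraphLaplacian {n : ℕ} (A : Matrix (Fin n) (Fin n) ℝ) : Prop :=
  (∀ k ℓ : Fin n, k ≠ ℓ → 0 ≤ A k ℓ) ∧ (∀ k : Fin n, A k k ≤ 0) ∧
    (∀ ℓ : Fin n, ∑ k : Fin n, A k ℓ = 0)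

section AuxNeumann

attribute [local instance] Matrix.linftyOpNormedRing Matrix.linftyOpNormedSpace

variable {n : ℕ}

/-- Evaluation of a matrix entry as a continuous linear map (w.r.t. the `L∞`-operator norm). -/
private noncomputable def entryCLM' (i j : Fin n) : Matrix (Fin n) (Fin n) ℝ →L[ℝ] ℝ :=
  LinearMap.mkContinuous
    { toFun := fun M => M i j
      map_add' := fun _ _ => rfl
      map_smul' := fun _ _ => rfl } 1
    (fun M => by
      rw [one_mul]
      have h1 : ‖M i j‖₊ ≤ ∑ l, ‖M i l‖₊ :=
        Finset.single_le_sum (f := fun l => ‖M i l‖₊) (fun l _ => zero_le)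
          (Finset.mem_univ j)
      have h2 : (∑ l, ‖M i l‖₊) ≤ ‖M‖₊ := by
        rw [Matrix.linfty_opNNNorm_def]
        exact Finset.le_sup (f := fun i => ∑ l, ‖M i l‖₊) (Finset.mem_univ i)
      exact_mod_cast h1.trans h2)

/-- Neumann series argument: if `P` is entrywise nonnegative with all row sums `< 1`,
then `1 - P` is invertible and its inverse is entrywise nonnegative. -/
private lemma one_sub_inv_nonneg {P : Matrix (Fin n) (Fin n) ℝ}
    (hP : ∀ i j, 0 ≤ P i j) (hrow : ∀ i, ∑ j, P i j < 1) :
    IsUnit (1 - P) ∧ ∀ i j, 0 ≤ ((1 - P)⁻¹) i j := by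
  have hnorm : ‖P‖ < 1 := by
    have : ‖P‖₊ < 1 := by
      rw [Matrix.linfty_opNNNorm_def]
      refine Finset.sup_lt_iff (by norm_num) |>.2 fun i _ => ?_
      have : ((∑ j, ‖P i j‖₊ : NNReal) : ℝ) < 1 := by
        push_cast
        calc ∑ j, (‖P i j‖₊ : ℝ) = ∑ j, P i j := by
              refine Finset.sum_congr rfl fun j _ => ?_
              rw [coe_nnnorm, Real.norm_eq_abs, abs_of_nonneg (hP i j)]
          _ < 1 := hrow i
      exact_mod_cast this
    exact_mod_cast this
  have hpow : ∀ (k : ℕ) i j, 0 ≤ (P ^ k) i j := by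
    intro k
    induction k with
    | zero => intro i j; rw [pow_zero, Matrix.one_apply]; positivity
    | succ k ih =>
      intro i j
      rw [pow_succ, Matrix.mul_apply]
      exact Finset.sum_nonneg fun l _ => mul_nonneg (ih i l) (hP l j)
  have hu : IsUnit (1 - P) := isUnit_one_sub_of_norm_lt_one hnorm
  refine ⟨hu, fun i j => ?_⟩
  have hsum : HasSum (fun k : ℕ => P ^ k) (Ring.inverse (1 - P)) :=
    hasSum_geom_series_inverse P hnorm
  have h2 : HasSum (fun k : ℕ => (P ^ k) i j) ((Ring.inverse (1 - P)) i j) := by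
    have := (entryCLM' i j).hasSum hsum
    exact this
  rw [Matrix.nonsing_inv_eq_ringInverse]
  exact h2.nonneg (fun k => hpow k i j)

end AuxNeumann

/-- Proposition 7: for a graph Laplacian `A` and `t ≥ 0`, the matrix `I - t•A` is
invertible and its inverse is entrywise nonnegative. -/
theorem resolvent_nonneg
    {n : ℕ} (A : Matrix (Fin n) (Fin n) ℝ)
    (hA : IsGraphLaplacian A)
    (t : ℝ) (ht : 0 ≤ t) :
    IsUnit (1 - t • A) ∧ ∀ i j : Fin n, 0 ≤ ((1 - t • A)⁻¹) i j := by
  obtain ⟨hoff, hdiag, hcol⟩ := hA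
  -- a shift making the diagonal nonnegative
  set c : ℝ := ∑ k : Fin n, t * (-A k k) with hc_def
  have hc : 0 ≤ c :=
    Finset.sum_nonneg fun k _ => mul_nonneg ht (neg_nonneg.2 (hdiag k))
  have hck : ∀ k : Fin n, t * (-A k k) ≤ c := fun k =>
    Finset.single_le_sum (f := fun k => t * (-A k k))
      (fun l _ => mul_nonneg ht (neg_nonneg.2 (hdiag l))) (Finset.mem_univ k)
  have h1c : (0 : ℝ) < 1 + c := by linarith
  set P : Matrix (Fin n) (Fin n) ℝ := (1 + c)⁻¹ • (c • (1 : Matrix (Fin n) (Fin n) ℝ) + t • Aᵀ)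
    with hP_def
  have hPapp : ∀ i j, P i j = (1 + c)⁻¹ * (c * (if i = j then 1 else 0) + t * A j i) := by
    intro i j
    simp only [hP_def, Matrix.smul_apply, Matrix.add_apply, Matrix.one_apply,
      Matrix.transpose_apply, smul_eq_mul]
  have hP : ∀ i j, 0 ≤ P i j := by
    intro i j
    rw [hPapp]
    rcases eq_or_ne i j with rfl | hij
    · simp only [eq_self_iff_true, if_true, mul_one]
      have h0 : 0 ≤ c + t * A i i := by nlinarith [hck i]
      exact mul_nonneg (by positivity) h0
    · simp only [if_neg hij, mul_zero, zero_add]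
      have := hoff j i (Ne.symm hij)
      positivity
  have hrow : ∀ i, ∑ j, P i j < 1 := by
    intro i
    have hδ : ∑ j : Fin n, (c * if i = j then (1:ℝ) else 0) = c := by simp
    have hsum : ∑ j, P i j = (1 + c)⁻¹ * c := by
      simp_rw [hPapp, ← Finset.mul_sum, Finset.sum_add_distrib, hδ, ← Finset.mul_sum,
        hcol i, mul_zero, add_zero]
    rw [hsum, inv_mul_lt_iff₀ h1c]
    linarith
  obtain ⟨hu, hinv⟩ := one_sub_inv_nonneg hP hrow
  -- relate `1 - P` to `(1 - t • A)ᵀ`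
  have hkey : (1 - t • A)ᵀ = (1 + c) • (1 - P) := by
    rw [hP_def]
    rw [smul_sub, smul_smul, mul_inv_cancel₀ h1c.ne', one_smul]
    simp only [Matrix.transpose_sub, Matrix.transpose_one, Matrix.transpose_smul]
    module
  have hdetP : IsUnit (1 - P).det := (Matrix.isUnit_iff_isUnit_det _).1 hu
  have hdetM : IsUnit (1 - t • A).det := by
    have h1 : ((1 - t • A)ᵀ).det = (1 + c) ^ n * (1 - P).det := by
      rw [hkey, Matrix.det_smul]
      simp
    rw [← Matrix.det_transpose, h1]
    exact (IsUnit.pow n (isUnit_iff_ne_zero.2 h1c.ne')).mul hdetP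
  refine ⟨(Matrix.isUnit_iff_isUnit_det _).2 hdetM, fun i j => ?_⟩
  -- compute the inverse via the transpose
  have : Invertible (1 + c : ℝ) := invertibleOfNonzero h1c.ne'
  have hTinv : ((1 - t • A)ᵀ)⁻¹ = ⅟(1 + c : ℝ) • (1 - P)⁻¹ := by
    rw [hkey]
    exact Matrix.inv_smul (1 + c) (A := 1 - P) hdetP
  have hinvT : (1 - t • A)⁻¹ i j = ((1 - t • A)ᵀ)⁻¹ j i := by
    rw [← Matrix.transpose_nonsing_inv]
    rfl
  rw [hinvT, hTinv]
  simp only [Matrix.smul_apply, smul_eq_mul]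
  have hiv : (0 : ℝ) ≤ ⅟(1 + c : ℝ) := by
    rw [invOf_eq_inv]
    positivity
  exact mul_nonneg hiv (hinv j i)
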